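/- Let z₁ = e₁, z₂ = e₂, z₃ = (1/2)e₁ + (1/2)e₂, z₁* = e₁* − e₂*, z₂* = e₂*, z₃* = e₁* + e₂* in ℓ₁² × ℓ_∞². Then ‖z_j‖₁ = ‖z_j*‖_∞ = z_j*(z_j) = 1 for all j, the frame operator of (z_j, z_j*) is not a scalar multiple of the identity, and Σ_{j,k=1}^3 |z_j*(z_k) z_k*(z_j)| = 4, which is strictly less than the value 9/2 of the same expression for the FUNTF x₁ = e₁, x₂ = (1/4)e₁ − (3/4)e₂, x₃ = (1/4)e₁ + (3/4)e₂ with x₁* = e₁*, x₂* = e₁* − e₂*, x₃* = e₁* + e₂*. -/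

import Mathlib

open scoped BigOperators

/-- `ℓ₁²`: `ℝ²` with the `ℓ₁` norm. -/
noncomputable abbrev L1two := PiLp 1 (fun _ : Fin 2 => ℝ)
/-- `ℓ_∞²`: `ℝ²` with the sup norm (the dual of `ℓ₁²`). -/
noncomputable abbrev Linftwo := PiLp ⊤ (fun _ : Fin 2 => ℝ)

/-- The duality pairing between `ℓ_∞²` and `ℓ₁²`. -/
noncomputable def pair2 (f : Linftwo) (v : L1two) : ℝ :=
  ∑ i, (WithLp.equiv ⊤ (Fin 2 → ℝ) f) i * (WithLp.equiv 1 (Fin 2 → ℝ) v) i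

noncomputable def zv : Fin 3 → L1two := fun j =>
  (WithLp.equiv 1 (Fin 2 → ℝ)).symm
    (![![1, 0], ![0, 1], ![1/2, 1/2]] j)

noncomputable def zf : Fin 3 → Linftwo := fun j =>
  (WithLp.equiv ⊤ (Fin 2 → ℝ)).symm
    (![![1, -1], ![0, 1], ![1, 1]] j)

noncomputable def xv : Fin 3 → L1two := fun j =>
  (WithLp.equiv 1 (Fin 2 → ℝ)).symm
    (![![1, 0], ![1/4, -(3/4)], ![1/4, 3/4]] j)

noncomputable def xf : Fin 3 → Linftwo := fun j =>
  (WithLp.equiv ⊤ (Fin 2 → ℝ)).symm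
    (![![1, 0], ![1, -1], ![1, 1]] j)

lemma norm1 (v : L1two) : ‖v‖ = |v 0| + |v 1| := by
  rw [PiLp.norm_eq_sum (by norm_num)]
  simp [Fin.sum_univ_two, Real.norm_eq_abs]

lemma normi (f : Linftwo) : ‖f‖ = max |f 0| |f 1| := by
  rw [PiLp.norm_eq_ciSup]
  have hb : BddAbove (Set.range fun i : Fin 2 => ‖f i‖) := (Set.finite_range _).bddAbove
  apply le_antisymm
  · exact ciSup_le fun i => by fin_cases i <;> simp [Real.norm_eq_abs, le_max_left, le_max_right]
  · apply max_le
    · simpa [Real.norm_eq_abs] using le_ciSup hb (0 : Fin 2)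
    · simpa [Real.norm_eq_abs] using le_ciSup hb (1 : Fin 2)

lemma pair2_eq (f : Linftwo) (v : L1two) : pair2 f v = f 0 * v 0 + f 1 * v 1 := by
  simp [pair2, Fin.sum_univ_two, WithLp.equiv_apply, PiLp.toLp_apply, Matrix.cons_val_zero, Matrix.cons_val_one, Matrix.head_cons]

/-- The alternative frame potential `∑ |x_j^*(x_k) x_k^*(x_j)|` does not characterize FUNTFs:
`(z_j, z_j^*)` is unit norm but not a FUNTF, yet has strictly smaller value than the FUNTF
`(x_j, x_j^*)`. -/
theorem alternative_frame_potential_fails :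
    (∀ j, ‖zv j‖ = 1) ∧ (∀ j, ‖zf j‖ = 1) ∧ (∀ j, pair2 (zf j) (zv j) = 1) ∧
    (¬ ∃ c : ℝ, ∀ v : L1two, ∑ j, pair2 (zf j) v • zv j = c • v) ∧
    (∑ j, ∑ k, |pair2 (zf j) (zv k) * pair2 (zf k) (zv j)| = 4) ∧
    (∑ j, ∑ k, |pair2 (xf j) (xv k) * pair2 (xf k) (xv j)| = 9/2) ∧
    (4 : ℝ) < 9/2 := by
  refine ⟨?_, ?_, ?_, ?_, ?_, ?_, by norm_num⟩
  · intro j; fin_cases j <;> rw [norm1] <;> simp [zv, WithLp.equiv_apply, PiLp.toLp_apply, Matrix.cons_val_zero, Matrix.cons_val_one, Matrix.head_cons] <;> norm_num [abs_of_nonneg]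
  · intro j; fin_cases j <;> rw [normi] <;> simp [zf, WithLp.equiv_apply, PiLp.toLp_apply, Matrix.cons_val_zero, Matrix.cons_val_one, Matrix.head_cons] <;> norm_num [abs_of_nonneg]
  · intro j; fin_cases j <;> rw [pair2_eq] <;> simp [zf, zv, WithLp.equiv_apply, PiLp.toLp_apply, Matrix.cons_val_zero, Matrix.cons_val_one, Matrix.head_cons] <;> norm_num [abs_of_nonneg]
  · rintro ⟨c, hc⟩
    have h := hc ((WithLp.equiv 1 (Fin 2 → ℝ)).symm ![1, 0])
    have h1 := congrArg (fun w : L1two => w 1) h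
    simp [pair2_eq, zf, zv, WithLp.equiv_apply, PiLp.toLp_apply, Matrix.cons_val_zero, Matrix.cons_val_one, Matrix.head_cons, Fin.sum_univ_three] at h1
  · simp only [Fin.sum_univ_three, pair2_eq]
    simp [zf, zv, WithLp.equiv_apply, PiLp.toLp_apply, Matrix.cons_val_zero, Matrix.cons_val_one, Matrix.head_cons]
    norm_num [abs_of_nonneg]
  · simp only [Fin.sum_univ_three, pair2_eq]
    simp [xf, xv, WithLp.equiv_apply, PiLp.toLp_apply, Matrix.cons_val_zero, Matrix.cons_val_one, Matrix.head_cons]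
    norm_num [abs_of_nonneg]
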